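/- For all positive integers m and d, let k = d·2^m and let f : {-1,1}^{mk} → {0,1} be the AND of k OR-functions on disjoint blocks of m bits (f_i(x) = 1 unless all m bits of block i are a fixed pattern). Then W_{1,d}[f] = ∑_{|S|=d} |f̂(S)| ≥ (m/e^{3/2})^d. -/

import Mathlib

open Finset

/-- The sign of a Boolean bit, as a real number in `{-1, 1}`. -/
noncomputable def sgn (b : Bool) : ℝ := if b then 1 else -1

/-- Fourier coefficient of a function on `{-1,1}^{mk}` (viewed as `k` blocks of `m` bits)
at the set of coordinates `S = (S_1, …, S_k)`, over the uniform distribution. -/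
noncomputable def fhatP {k m : ℕ} (f : (Fin k → Fin m → Bool) → ℝ)
    (S : Fin k → Finset (Fin m)) : ℝ :=
  (∑ x : Fin k → Fin m → Bool, f x * ∏ i, ∏ j ∈ S i, sgn (x i j)) / 2 ^ (m * k)

/-- Level-`d` Fourier weight in `L₁`-norm of a function on `k` blocks of `m` bits. -/
noncomputable def W1P {k m : ℕ} (f : (Fin k → Fin m → Bool) → ℝ) (d : ℕ) : ℝ :=
  ∑ S ∈ Finset.univ.filter (fun S : Fin k → Finset (Fin m) => ∑ i, (S i).card = d),
    |fhatP f S|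

lemma abs_sgn (b : Bool) : |sgn b| = 1 := by
  unfold sgn; rcases b <;> simp

lemma chi_sum (m : ℕ) (S : Finset (Fin m)) :
    ∑ y : Fin m → Bool, ∏ j ∈ S, sgn (y j) = if S = ∅ then (2:ℝ)^m else 0 := by
  have h1 : ∀ y : Fin m → Bool, ∏ j ∈ S, sgn (y j)
      = ∏ j : Fin m, (if j ∈ S then sgn (y j) else 1) := by
    intro y
    rw [Finset.prod_ite_mem, Finset.univ_inter]
  simp only [h1]
  rw [← Fintype.piFinset_univ, ← Finset.prod_univ_sum (fun _ => univ)
    (fun j b => if j ∈ S then sgn b else 1)]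
  have h2 : ∀ j : Fin m, (∑ b : Bool, if j ∈ S then sgn b else 1)
      = if j ∈ S then 0 else 2 := by
    intro j
    by_cases h : j ∈ S <;> simp [h, sgn]
  simp only [h2]
  by_cases hS : S = ∅
  · simp [hS]
  · rw [if_neg hS]
    obtain ⟨j, hj⟩ := Finset.nonempty_iff_ne_empty.2 hS
    exact Finset.prod_eq_zero (Finset.mem_univ j) (by simp [hj])

lemma c_eval {m : ℕ} (p : Fin m → Bool) (S : Finset (Fin m)) :
    (∑ y : Fin m → Bool, (if y = p then (0:ℝ) else 1) * ∏ j ∈ S, sgn (y j))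
      = (if S = ∅ then (2:ℝ)^m else 0) - ∏ j ∈ S, sgn (p j) := by
  have h1 : ∀ y : Fin m → Bool, (if y = p then (0:ℝ) else 1) * ∏ j ∈ S, sgn (y j)
      = (∏ j ∈ S, sgn (y j)) - (if y = p then (∏ j ∈ S, sgn (y j)) else 0) := by
    intro y; by_cases h : y = p <;> simp [h]
  simp only [h1]
  rw [Finset.sum_sub_distrib, chi_sum, Finset.sum_ite_eq' univ p, if_pos (Finset.mem_univ p)]

lemma fhat_prod {k m : ℕ} (p : Fin k → Fin m → Bool) (S : Fin k → Finset (Fin m)) :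
    fhatP (fun x : Fin k → Fin m → Bool => ∏ i, (if x i = p i then (0:ℝ) else 1)) S
    = ∏ i, ((∑ y : Fin m → Bool, (if y = p i then (0:ℝ) else 1) * ∏ j ∈ S i, sgn (y j)) / 2^m) := by
  unfold fhatP
  rw [Finset.prod_div_distrib]
  have h2 : (∏ _i : Fin k, (2:ℝ)^m) = 2 ^ (m * k) := by
    rw [Finset.prod_const, Finset.card_univ, Fintype.card_fin, ← pow_mul]
  rw [h2]
  congr 1
  rw [← Fintype.piFinset_univ, Finset.prod_univ_sum (fun _ => univ)
    (fun i y => (if y = p i then (0:ℝ) else 1) * ∏ j ∈ S i, sgn (y j))]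
  apply Finset.sum_congr rfl
  intro x _
  rw [← Finset.prod_mul_distrib]

noncomputable def wB (m : ℕ) (S : Finset (Fin m)) : ℝ :=
  if S = ∅ then ((2:ℝ)^m - 1)/2^m else 1/2^m

lemma wB_nonneg (m : ℕ) (S : Finset (Fin m)) : 0 ≤ wB m S := by
  unfold wB
  have h1 : (1:ℝ) ≤ 2^m := one_le_pow₀ (by norm_num)
  split_ifs
  · apply div_nonneg (by linarith) (by positivity)
  · positivity

lemma abs_fhat {k m : ℕ} (p : Fin k → Fin m → Bool) (S : Fin k → Finset (Fin m)) :
    |fhatP (fun x : Fin k → Fin m → Bool => ∏ i, (if x i = p i then (0:ℝ) else 1)) S|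
    = ∏ i, wB m (S i) := by
  rw [fhat_prod, Finset.abs_prod]
  apply Finset.prod_congr rfl
  intro i _
  rw [c_eval, abs_div, abs_of_nonneg (by positivity : (0:ℝ) ≤ 2^m)]
  unfold wB
  by_cases h : S i = ∅
  · rw [if_pos h, if_pos h, h]
    simp only [Finset.prod_empty]
    rw [abs_of_nonneg]
    have h1 : (1:ℝ) ≤ 2^m := one_le_pow₀ (by norm_num)
    linarith
  · rw [if_neg h, if_neg h, zero_sub, abs_neg]
    congr 1
    rw [Finset.abs_prod]
    apply Finset.prod_eq_one
    intro j _
    exact abs_sgn _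

def Econf {k d n m : ℕ} (e : Fin k ≃ Fin d × Fin n) (a : Fin d → Fin n × Fin m)
    (i : Fin k) : Finset (Fin m) :=
  if (a (e i).1).1 = (e i).2 then {(a (e i).1).2} else ∅

lemma Econf_card {k d n m : ℕ} (e : Fin k ≃ Fin d × Fin n) (a : Fin d → Fin n × Fin m) :
    ∑ i, (Econf e a i).card = d := by
  unfold Econf
  rw [Fintype.sum_equiv e _ (fun q => (if (a q.1).1 = q.2 then ({(a q.1).2} : Finset (Fin m)) else ∅).card) (fun i => rfl)]
  rw [Fintype.sum_prod_type]
  have h : ∀ t : Fin d, (∑ b : Fin n,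
      (if (a t).1 = b then ({(a t).2} : Finset (Fin m)) else ∅).card) = 1 := by
    intro t
    have : ∀ b : Fin n, (if (a t).1 = b then ({(a t).2} : Finset (Fin m)) else ∅).card
        = if (a t).1 = b then 1 else 0 := by
      intro b; split_ifs <;> simp
    simp only [this]
    rw [Finset.sum_ite_eq univ (a t).1 (fun _ => 1), if_pos (Finset.mem_univ _)]
  simp only [h]
  simp

lemma Econf_inj {k d n m : ℕ} (e : Fin k ≃ Fin d × Fin n)
    (a a' : Fin d → Fin n × Fin m) (h : Econf e a = Econf e a') : a = a' := by
  funext t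
  have h1 := congrFun h (e.symm (t, (a t).1))
  unfold Econf at h1
  simp only [Equiv.apply_symm_apply] at h1
  rw [if_true] at h1
  by_cases hc : (a' t).1 = (a t).1
  · rw [if_pos hc] at h1
    have h2 : (a t).2 = (a' t).2 := Finset.singleton_injective h1
    exact Prod.ext hc.symm h2
  · rw [if_neg hc] at h1
    exact absurd h1 (Finset.singleton_ne_empty _)

lemma Econf_prod {k d n m : ℕ} (e : Fin k ≃ Fin d × Fin n) (a : Fin d → Fin n × Fin m) :
    ∏ i, wB m (Econf e a i)
      = ((1/2^m) * (((2:ℝ)^m - 1)/2^m)^(n-1))^d := by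
  unfold Econf
  rw [Fintype.prod_equiv e _ (fun q => wB m (if (a q.1).1 = q.2 then ({(a q.1).2} : Finset (Fin m)) else ∅)) (fun i => rfl)]
  rw [Fintype.prod_prod_type]
  have h : ∀ t : Fin d, (∏ b : Fin n,
      wB m (if (a t).1 = b then ({(a t).2} : Finset (Fin m)) else ∅))
      = (1/2^m) * (((2:ℝ)^m - 1)/2^m)^(n-1) := by
    intro t
    have hv : ∀ b : Fin n, wB m (if (a t).1 = b then ({(a t).2} : Finset (Fin m)) else ∅)
        = if (a t).1 = b then 1/2^m else ((2:ℝ)^m - 1)/2^m := by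
      intro b
      split_ifs with hb
      · rw [wB, if_neg (Finset.singleton_ne_empty _)]
      · rw [wB, if_pos rfl]
    simp only [hv]
    rw [← Finset.mul_prod_erase univ _ (Finset.mem_univ (a t).1), if_pos rfl]
    congr 1
    rw [Finset.prod_congr rfl (fun b hb => if_neg (Ne.symm (Finset.ne_of_mem_erase hb))),
      Finset.prod_const, Finset.card_erase_of_mem (Finset.mem_univ _), Finset.card_univ,
      Fintype.card_fin]
  simp only [h]
  simp

lemma exp_bound_aux (n : ℕ) (hn : 2 ≤ n) :
    Real.exp (-1) ≤ (((n:ℝ) - 1)/n)^(n-1) := by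
  obtain ⟨j, rfl⟩ : ∃ j, n = j + 1 := ⟨n - 1, (Nat.succ_pred_eq_of_pos (by omega)).symm⟩
  have hj : 1 ≤ j := by omega
  have hj0 : (0:ℝ) < j := by exact_mod_cast hj
  have hcast : ((↑(j+1):ℝ) - 1)/(↑(j+1)) = (j:ℝ)/(j+1) := by push_cast; ring
  rw [Nat.add_sub_cancel, hcast]
  have h1 : ((j:ℝ) + 1)/j ≤ Real.exp (1/j) := by
    rw [div_le_iff₀ hj0]
    calc (j:ℝ) + 1 = (1/j + 1) * j := by field_simp; ring
      _ ≤ Real.exp (1/j) * j := by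
          apply mul_le_mul_of_nonneg_right (Real.add_one_le_exp _) hj0.le
  have h2 : (((j:ℝ) + 1)/j)^j ≤ Real.exp 1 := by
    calc (((j:ℝ) + 1)/j)^j ≤ Real.exp (1/j) ^ j := by
          apply pow_le_pow_left₀ (by positivity) h1
      _ = Real.exp ((j:ℕ) * (1/j)) := by rw [Real.exp_nat_mul]
      _ = Real.exp 1 := by
          congr 1
          field_simp
  have hpos : (0:ℝ) < (((j:ℝ) + 1)/j)^j := by positivity
  calc Real.exp (-1) = (Real.exp 1)⁻¹ := by rw [Real.exp_neg]
    _ ≤ ((((j:ℝ) + 1)/j)^j)⁻¹ := inv_anti₀ hpos h2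
    _ = (((j:ℝ))/(j+1))^j := by
        rw [← inv_pow]
        congr 1
        field_simp

/-- For `k = d·2^m`, the AND of `k` OR-functions on disjoint blocks of `m` bits
(the `i`-th function is `1` unless block `i` equals the fixed pattern `p i`)
has level-`d` Fourier weight at least `(m/e^{3/2})^d`. -/
theorem stmt9 (m d : ℕ) (hm : 0 < m) (hd : 0 < d) (k : ℕ) (hk : k = d * 2 ^ m)
    (p : Fin k → Fin m → Bool) :
    ((m : ℝ) / Real.exp (3 / 2)) ^ d
      ≤ W1P (fun x : Fin k → Fin m → Bool =>
          ∏ i, (if x i = p i then (0 : ℝ) else 1)) d := by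
  set n := 2^m with hn
  have hn2 : 2 ≤ n := by
    calc 2 = 2^1 := rfl
      _ ≤ 2^m := Nat.pow_le_pow_right (by norm_num) hm
  have hcast2 : ((n:ℕ):ℝ) = (2:ℝ)^m := by rw [hn]; push_cast; ring
  have h2m : (0:ℝ) < 2^m := by positivity
  let e : Fin k ≃ Fin d × Fin n := (finCongr hk).trans finProdFinEquiv.symm
  have hB : Real.exp (-(3/2)) ≤ (((2:ℝ)^m - 1)/2^m)^(n-1) := by
    have hstep : Real.exp (-(3/2)) ≤ Real.exp (-1) := Real.exp_le_exp.2 (by norm_num)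
    refine le_trans hstep ?_
    have := exp_bound_aux n hn2
    rwa [hcast2] at this
  have harith : ((m:ℝ) / Real.exp (3/2))^d
      ≤ ((n*m:ℕ):ℝ)^d * ((1/2^m) * (((2:ℝ)^m - 1)/2^m)^(n-1))^d := by
    rw [← mul_pow]
    apply pow_le_pow_left₀ (by positivity)
    calc (m:ℝ)/Real.exp (3/2) = m * Real.exp (-(3/2)) := by
          rw [Real.exp_neg]; ring
      _ ≤ m * (((2:ℝ)^m-1)/2^m)^(n-1) :=
          mul_le_mul_of_nonneg_left hB (Nat.cast_nonneg m)
      _ = ((n*m:ℕ):ℝ) * ((1/2^m) * (((2:ℝ)^m-1)/2^m)^(n-1)) := by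
          push_cast
          rw [hcast2]
          field_simp
  have habs : W1P (fun x : Fin k → Fin m → Bool =>
        ∏ i, (if x i = p i then (0 : ℝ) else 1)) d
      = ∑ S ∈ Finset.univ.filter
          (fun S : Fin k → Finset (Fin m) => ∑ i, (S i).card = d),
          ∏ i, wB m (S i) :=
    Finset.sum_congr rfl (fun S _ => abs_fhat p S)
  calc ((m:ℝ)/Real.exp (3/2))^d
      ≤ ((n*m:ℕ):ℝ)^d * ((1/2^m) * (((2:ℝ)^m - 1)/2^m)^(n-1))^d := harith
    _ = ∑ _a : Fin d → Fin n × Fin m,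
          ((1/2^m) * (((2:ℝ)^m - 1)/2^m)^(n-1))^d := by
        rw [Finset.sum_const, Finset.card_univ, nsmul_eq_mul]
        congr 1
        rw [Fintype.card_fun]
        push_cast
        simp
    _ = ∑ a : Fin d → Fin n × Fin m, ∏ i, wB m (Econf e a i) := by
        exact Finset.sum_congr rfl (fun a _ => (Econf_prod e a).symm)
    _ = ∑ S ∈ Finset.image (Econf e) univ, ∏ i, wB m (S i) := by
        rw [Finset.sum_image (fun a _ b _ h => Econf_inj e a b h)]
    _ ≤ ∑ S ∈ Finset.univ.filter
          (fun S : Fin k → Finset (Fin m) => ∑ i, (S i).card = d),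
          ∏ i, wB m (S i) := by
        apply Finset.sum_le_sum_of_subset_of_nonneg
        · intro S hS
          simp only [Finset.mem_image] at hS
          obtain ⟨a, _, rfl⟩ := hS
          simp [Finset.mem_filter, Econf_card]
        · intro S _ _
          exact Finset.prod_nonneg (fun i _ => wB_nonneg m (S i))
    _ = _ := habs.symm
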